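/- arXiv:2207.03388 — 2 statements merged into one kernel-verified Lean document; each statement's English description precedes it below -/
import Mathlib

section
/- Let A be a real m×n matrix with m ≥ n, rank(A) = n, all rows nonzero, and Ax = b. Fix x_0 ∈ ℝ^n, k ∈ ℕ, and ε > 0. Suppose that no choice of at most k successive projections starting from x_0 produces the exact solution x (i.e., for every index sequence ω ∈ {1,…,m}^k and every 0 ≤ j ≤ k one has x_j(ω) ≠ x). Then E[ log(‖x_k − x‖/‖x_0 − x‖) ] ≤ (k/2)·log(1 − ε²/‖A‖_F²) · (1/k)·Σ_{i=0}^{k−1} P( ‖A x_i − b‖/‖x_i − x‖ ≥ ε ), where E and P denote expectation and probability for the random Kaczmarz process of length k, i.e., the weighted average over all index sequences ω ∈ {1,…,m}^k with weight ∏_{j=1}^{k} ‖a_{ω_j}‖²/‖A‖_F². -/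
noncomputable section

/-- The `i`-th row of `A` as a vector in Euclidean space. -/
def rowv {m n : ℕ} (A : Matrix (Fin m) (Fin n) ℝ) (i : Fin m) : EuclideanSpace ℝ (Fin n) :=
  WithLp.toLp 2 (fun j => A i j)

/-- Matrix-vector multiplication, landing in Euclidean space. -/
def mulV {m n : ℕ} (A : Matrix (Fin m) (Fin n) ℝ) (v : EuclideanSpace ℝ (Fin n)) :
    EuclideanSpace ℝ (Fin m) := WithLp.toLp 2 (fun i => ∑ j, A i j * v j)

/-- The square of the Frobenius norm `‖A‖_F²`. -/
def frobSq {m n : ℕ} (A : Matrix (Fin m) (Fin n) ℝ) : ℝ := ∑ i, ∑ j, (A i j) ^ 2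

/-- The operator norm `‖A‖` (ℓ² → ℓ²). -/
def opN {m n : ℕ} (A : Matrix (Fin m) (Fin n) ℝ) : ℝ :=
  ‖LinearMap.toContinuousLinearMap (Matrix.toEuclideanLin A)‖

/-- Orthogonal projection of `w` onto the hyperplane `{v : ⟨a_i, v⟩ = b_i}`. -/
def proj {m n : ℕ} (A : Matrix (Fin m) (Fin n) ℝ) (b : EuclideanSpace ℝ (Fin m)) (i : Fin m)
    (w : EuclideanSpace ℝ (Fin n)) : EuclideanSpace ℝ (Fin n) :=
  w + ((b i - inner (𝕜 := ℝ) (rowv A i) w) / ‖rowv A i‖ ^ 2) • rowv A i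

/-- The Kaczmarz trajectory: `traj A b x0 ω j` is `x_j(ω) = π_{ω_j} ⋯ π_{ω_1} x_0`. -/
def traj {m n k : ℕ} (A : Matrix (Fin m) (Fin n) ℝ) (b : EuclideanSpace ℝ (Fin m))
    (x0 : EuclideanSpace ℝ (Fin n)) (ω : Fin k → Fin m) : ℕ → EuclideanSpace ℝ (Fin n)
  | 0 => x0
  | j + 1 => if h : j < k then proj A b (ω ⟨j, h⟩) (traj A b x0 ω j) else traj A b x0 ω j

/-- The weight `∏_j ‖a_{ω_j}‖²/‖A‖_F²` of an index sequence `ω` for the random Kaczmarz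
process. -/
def wt {m n k : ℕ} (A : Matrix (Fin m) (Fin n) ℝ) (ω : Fin k → Fin m) : ℝ :=
  ∏ j, ‖rowv A (ω j)‖ ^ 2 / frobSq A

end

open Finset

-- helper: squared norm in Euclidean space
lemma normSq_eq {N : ℕ} (v : EuclideanSpace ℝ (Fin N)) : ‖v‖ ^ 2 = ∑ i, v i ^ 2 := by
  rw [EuclideanSpace.norm_eq, Real.sq_sqrt (by positivity)]
  simp [Real.norm_eq_abs, sq_abs]

lemma inner_rowv {m n : ℕ} (A : Matrix (Fin m) (Fin n) ℝ) (i : Fin m)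
    (v : EuclideanSpace ℝ (Fin n)) :
    inner (𝕜 := ℝ) (rowv A i) v = ∑ j, A i j * v j := by
  simp [PiLp.inner_apply, rowv, RCLike.inner_apply, mul_comm]

lemma frobSq_eq {m n : ℕ} (A : Matrix (Fin m) (Fin n) ℝ) :
    frobSq A = ∑ i, ‖rowv A i‖ ^ 2 := by
  simp [frobSq, normSq_eq, rowv]

-- key projection identity
lemma proj_sub_sq {m n : ℕ} (A : Matrix (Fin m) (Fin n) ℝ) (b : EuclideanSpace ℝ (Fin m))
    (x : EuclideanSpace ℝ (Fin n)) (hAx : mulV A x = b) (i : Fin m) (hrow : rowv A i ≠ 0)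
    (w : EuclideanSpace ℝ (Fin n)) :
    ‖proj A b i w - x‖ ^ 2
      = ‖w - x‖ ^ 2 - (inner (𝕜 := ℝ) (rowv A i) (w - x)) ^ 2 / ‖rowv A i‖ ^ 2 := by
  set a := rowv A i with ha
  have hb : b i = inner (𝕜 := ℝ) a x := by
    rw [← hAx]; rw [inner_rowv]; rfl
  have hna : (0:ℝ) < ‖a‖ ^ 2 := pow_pos (norm_pos_iff.mpr hrow) 2
  have hc : b i - inner (𝕜 := ℝ) a w = - inner (𝕜 := ℝ) a (w - x) := by
    rw [hb, inner_sub_right]; ring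
  have hproj : proj A b i w - x = (w - x) + ((- inner (𝕜 := ℝ) a (w - x)) / ‖a‖ ^ 2) • a := by
    rw [proj, ← ha, hc]; abel
  set s : ℝ := inner (𝕜 := ℝ) a (w - x) with hs
  rw [hproj, norm_add_sq_real]
  rw [real_inner_smul_right, norm_smul, mul_pow]
  have h1 : inner (𝕜 := ℝ) (w - x) a = s := real_inner_comm _ _
  rw [h1]
  have h2 : ‖(-s / ‖a‖ ^ 2 : ℝ)‖ ^ 2 = s ^ 2 / (‖a‖ ^ 2) ^ 2 := by
    rw [Real.norm_eq_abs, sq_abs]; ring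
  rw [h2]
  field_simp
  ring

lemma sum_p_eq_one {m n : ℕ} (A : Matrix (Fin m) (Fin n) ℝ) (hF : 0 < frobSq A) :
    ∑ t, ‖rowv A t‖ ^ 2 / frobSq A = 1 := by
  rw [← Finset.sum_div, ← frobSq_eq, div_self hF.ne']

lemma mulV_sub {m n : ℕ} (A : Matrix (Fin m) (Fin n) ℝ) (b : EuclideanSpace ℝ (Fin m))
    (x : EuclideanSpace ℝ (Fin n)) (hAx : mulV A x = b) (z : EuclideanSpace ℝ (Fin n)) (t : Fin m) :
    (mulV A z - b) t = inner (𝕜 := ℝ) (rowv A t) (z - x) := by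
  rw [inner_rowv, ← hAx]
  show mulV A z t - mulV A x t = _
  rw [mulV, mulV, ← Finset.sum_sub_distrib]
  congr 1; funext j
  have : (z - x) j = z j - x j := rfl
  rw [this]; ring

lemma avg_identity {m n : ℕ} (A : Matrix (Fin m) (Fin n) ℝ) (b : EuclideanSpace ℝ (Fin m))
    (x : EuclideanSpace ℝ (Fin n)) (hAx : mulV A x = b) (hrows : ∀ i, rowv A i ≠ 0)
    (hF : 0 < frobSq A) (z : EuclideanSpace ℝ (Fin n)) :
    ∑ t, (‖rowv A t‖ ^ 2 / frobSq A) * ‖proj A b t z - x‖ ^ 2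
      = ‖z - x‖ ^ 2 - ‖mulV A z - b‖ ^ 2 / frobSq A := by
  have key : ∀ t, (‖rowv A t‖ ^ 2 / frobSq A) * ‖proj A b t z - x‖ ^ 2
      = (‖rowv A t‖ ^ 2 / frobSq A) * ‖z - x‖ ^ 2
        - (inner (𝕜 := ℝ) (rowv A t) (z - x)) ^ 2 / frobSq A := by
    intro t
    rw [proj_sub_sq A b x hAx t (hrows t)]
    have hna : (‖rowv A t‖ ^ 2 : ℝ) ≠ 0 := (pow_pos (norm_pos_iff.mpr (hrows t)) 2).ne'
    have hna' : ‖rowv A t‖ ≠ 0 := norm_ne_zero_iff.mpr (hrows t)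
    field_simp
  rw [Finset.sum_congr rfl (fun t _ => key t), Finset.sum_sub_distrib,
    ← Finset.sum_mul, sum_p_eq_one A hF, one_mul]
  congr 1
  rw [← Finset.sum_div, normSq_eq]
  congr 1
  exact Finset.sum_congr rfl fun t _ => by rw [mulV_sub A b x hAx z t]

-- per-step Jensen bound
lemma step_bound {m n : ℕ} (A : Matrix (Fin m) (Fin n) ℝ) (b : EuclideanSpace ℝ (Fin m))
    (x : EuclideanSpace ℝ (Fin n)) (hAx : mulV A x = b) (hrows : ∀ i, rowv A i ≠ 0)
    (hm : 0 < m) (hF : 0 < frobSq A) (ε : ℝ) (hε : 0 < ε)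
    (z : EuclideanSpace ℝ (Fin n)) (hz : z ≠ x) (hproj : ∀ t, proj A b t z ≠ x) :
    ∑ t, (‖rowv A t‖ ^ 2 / frobSq A) * Real.log (‖proj A b t z - x‖ / ‖z - x‖)
      ≤ (1 / 2) * Real.log (1 - ε ^ 2 / frobSq A) *
          (if ε ≤ ‖mulV A z - b‖ / ‖z - x‖ then (1:ℝ) else 0) := by
  set p : Fin m → ℝ := fun t => ‖rowv A t‖ ^ 2 / frobSq A with hp
  have hppos : ∀ t, 0 < p t := fun t => div_pos (pow_pos (norm_pos_iff.mpr (hrows t)) 2) hF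
  have hN : (0:ℝ) < ‖z - x‖ := norm_pos_iff.mpr (sub_ne_zero.mpr hz)
  have hq : ∀ t, (0:ℝ) < ‖proj A b t z - x‖ :=
    fun t => norm_pos_iff.mpr (sub_ne_zero.mpr (hproj t))
  set r : Fin m → ℝ := fun t => ‖proj A b t z - x‖ ^ 2 / ‖z - x‖ ^ 2 with hr
  have hrpos : ∀ t, 0 < r t := fun t => div_pos (pow_pos (hq t) 2) (pow_pos hN 2)
  set R : ℝ := ∑ t, p t * r t with hR
  -- each log term
  have hlog : ∀ t, Real.log (‖proj A b t z - x‖ / ‖z - x‖) = (1/2) * Real.log (r t) := by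
    intro t
    have : r t = (‖proj A b t z - x‖ / ‖z - x‖) ^ 2 := by rw [hr]; simp [div_pow]
    rw [this, Real.log_pow]
    push_cast; ring
  -- Jensen
  have jensen : ∑ t, p t * Real.log (r t) ≤ Real.log R := by
    have h := (strictConcaveOn_log_Ioi.concaveOn).le_map_sum
      (t := Finset.univ) (w := p) (p := r)
      (fun t _ => (hppos t).le) (sum_p_eq_one A hF) (fun t _ => hrpos t)
    simpa [smul_eq_mul] using h
  have hRval : R = 1 - ‖mulV A z - b‖ ^ 2 / frobSq A / ‖z - x‖ ^ 2 := by
    rw [hR]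
    have : ∀ t, p t * r t = (p t * ‖proj A b t z - x‖ ^ 2) / ‖z - x‖ ^ 2 := by
      intro t; rw [hr]; ring
    rw [Finset.sum_congr rfl fun t _ => this t, ← Finset.sum_div,
      avg_identity A b x hAx hrows hF z]
    field_simp
  have hR0 : 0 < R := by
    rw [hR]
    exact Finset.sum_pos (fun t _ => mul_pos (hppos t) (hrpos t)) ⟨⟨0, hm⟩, Finset.mem_univ _⟩
  have main : ∑ t, p t * Real.log (r t)
      ≤ Real.log (1 - ε ^ 2 / frobSq A) * (if ε ≤ ‖mulV A z - b‖ / ‖z - x‖ then (1:ℝ) else 0) := by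
    split_ifs with hev
    · -- event: R ≤ 1 - ε²/F
      have hD : ε * ‖z - x‖ ≤ ‖mulV A z - b‖ := (le_div_iff₀ hN).mp hev
      have hD2 : ε ^ 2 * ‖z - x‖ ^ 2 ≤ ‖mulV A z - b‖ ^ 2 := by
        have := mul_self_le_mul_self (by positivity) hD
        calc ε ^ 2 * ‖z - x‖ ^ 2 = (ε * ‖z - x‖) * (ε * ‖z - x‖) := by ring
          _ ≤ ‖mulV A z - b‖ * ‖mulV A z - b‖ := this
          _ = ‖mulV A z - b‖ ^ 2 := by ring
      have hle : R ≤ 1 - ε ^ 2 / frobSq A := by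
        rw [hRval]
        have : ε ^ 2 / frobSq A ≤ ‖mulV A z - b‖ ^ 2 / frobSq A / ‖z - x‖ ^ 2 := by
          rw [div_div, div_le_div_iff₀ hF (by positivity)]
          calc ε ^ 2 * (frobSq A * ‖z - x‖ ^ 2) = (ε ^ 2 * ‖z - x‖ ^ 2) * frobSq A := by ring
            _ ≤ ‖mulV A z - b‖ ^ 2 * frobSq A := by
                exact mul_le_mul_of_nonneg_right hD2 hF.le
        linarith
      calc ∑ t, p t * Real.log (r t) ≤ Real.log R := jensen
        _ ≤ Real.log (1 - ε ^ 2 / frobSq A) := by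
            rw [Real.log_le_log_iff hR0 (lt_of_lt_of_le hR0 hle)]; exact hle
        _ = _ := by ring
    · -- no event: bound by 0
      have hr1 : ∀ t, r t ≤ 1 := by
        intro t
        rw [hr, div_le_one (pow_pos hN 2)]
        have := proj_sub_sq A b x hAx t (hrows t) z
        nlinarith [sq_nonneg (inner (𝕜 := ℝ) (rowv A t) (z - x)),
          pow_pos (norm_pos_iff.mpr (hrows t)) 2,
          div_nonneg (sq_nonneg (inner (𝕜 := ℝ) (rowv A t) (z - x)))
            (pow_pos (norm_pos_iff.mpr (hrows t)) 2).le]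
      have hRle1 : R ≤ 1 := by
        rw [hR]
        calc ∑ t, p t * r t ≤ ∑ t, p t * 1 :=
              Finset.sum_le_sum fun t _ => mul_le_mul_of_nonneg_left (hr1 t) (hppos t).le
          _ = 1 := by simpa using sum_p_eq_one A hF
      calc ∑ t, p t * Real.log (r t) ≤ Real.log R := jensen
        _ ≤ 0 := Real.log_nonpos hR0.le hRle1
        _ = _ := by ring
  calc ∑ t, p t * Real.log (‖proj A b t z - x‖ / ‖z - x‖)
      = (1/2) * ∑ t, p t * Real.log (r t) := by
        rw [Finset.mul_sum]
        exact Finset.sum_congr rfl fun t _ => by rw [hlog t]; ring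
    _ ≤ (1/2) * (Real.log (1 - ε ^ 2 / frobSq A) * _) := by
        apply mul_le_mul_of_nonneg_left main (by norm_num)
    _ = _ := by ring

noncomputable section

def combineE {k m : ℕ} (ii : Fin k) :
    (Fin m × ({j : Fin k // j ≠ ii} → Fin m)) ≃ (Fin k → Fin m) where
  toFun p := fun j => if h : j = ii then p.1 else p.2 ⟨j, h⟩
  invFun ω := (ω ii, fun j => ω j)
  left_inv p := by
    refine Prod.ext ?_ ?_
    · simp
    · funext j; simp [dif_neg j.2]
  right_inv ω := by funext j; dsimp; split_ifs with h <;> simp [h]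

end

lemma combineE_at {k m : ℕ} (ii : Fin k) (t : Fin m) (ρ : {j : Fin k // j ≠ ii} → Fin m) :
    combineE ii (t, ρ) ii = t := by simp [combineE]

lemma combineE_ne {k m : ℕ} (ii : Fin k) (t : Fin m) (ρ : {j : Fin k // j ≠ ii} → Fin m)
    (j : Fin k) (h : j ≠ ii) : combineE ii (t, ρ) j = ρ ⟨j, h⟩ := by simp [combineE, dif_neg h]

lemma traj_congr {m n k : ℕ} (A : Matrix (Fin m) (Fin n) ℝ) (b : EuclideanSpace ℝ (Fin m))
    (x0 : EuclideanSpace ℝ (Fin n)) (ω ω' : Fin k → Fin m) (j : ℕ)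
    (h : ∀ l (hl : l < k), l < j → ω ⟨l, hl⟩ = ω' ⟨l, hl⟩) :
    traj A b x0 ω j = traj A b x0 ω' j := by
  induction j with
  | zero => rfl
  | succ j ih =>
    have ih' := ih (fun l hl hlj => h l hl (Nat.lt_succ_of_lt hlj))
    rw [traj, traj]
    split_ifs with hj
    · rw [ih', h j hj (Nat.lt_succ_self j)]
    · exact ih'

lemma wt_combine {m n k : ℕ} (A : Matrix (Fin m) (Fin n) ℝ) (ii : Fin k) (t : Fin m)
    (ρ : {j : Fin k // j ≠ ii} → Fin m) :
    wt A (combineE ii (t, ρ))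
      = (‖rowv A t‖ ^ 2 / frobSq A) * ∏ j : {j : Fin k // j ≠ ii}, ‖rowv A (ρ j)‖ ^ 2 / frobSq A := by
  rw [wt, Fintype.prod_eq_mul_prod_compl ii, combineE_at]
  congr 1
  rw [Finset.prod_subtype (p := fun j => j ≠ ii) (({ii}ᶜ : Finset (Fin k))) (fun j => by simp)
    (fun j => ‖rowv A (combineE ii (t, ρ) j)‖ ^ 2 / frobSq A)]
  exact Finset.prod_congr rfl fun j _ => by rw [combineE_ne ii t ρ j.1 j.2]

lemma sum_split {m k : ℕ} (ii : Fin k) (F : (Fin k → Fin m) → ℝ) :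
    ∑ ω : Fin k → Fin m, F ω
      = ∑ ρ : {j : Fin k // j ≠ ii} → Fin m, ∑ t : Fin m, F (combineE ii (t, ρ)) := by
  rw [← (combineE ii).sum_comp F, Fintype.sum_prod_type, Finset.sum_comm]

open Finset in
lemma step_sum {m n k : ℕ} (A : Matrix (Fin m) (Fin n) ℝ) (b : EuclideanSpace ℝ (Fin m))
    (x : EuclideanSpace ℝ (Fin n)) (hAx : mulV A x = b) (hrows : ∀ i, rowv A i ≠ 0)
    (hm : 0 < m) (hF : 0 < frobSq A) (ε : ℝ) (hε : 0 < ε)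
    (x0 : EuclideanSpace ℝ (Fin n))
    (hne : ∀ ω : Fin k → Fin m, ∀ j ≤ k, traj A b x0 ω j ≠ x)
    (i : ℕ) (hik : i < k) :
    ∑ ω : Fin k → Fin m, wt A ω *
        Real.log (‖traj A b x0 ω (i+1) - x‖ / ‖traj A b x0 ω i - x‖)
      ≤ (1/2) * Real.log (1 - ε ^ 2 / frobSq A) *
        ∑ ω : Fin k → Fin m, wt A ω *
          (if ε ≤ ‖mulV A (traj A b x0 ω i) - b‖ / ‖traj A b x0 ω i - x‖
            then (1:ℝ) else 0) := by
  set ii : Fin k := ⟨i, hik⟩ with hii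
  rw [sum_split ii, sum_split ii
    (fun ω => wt A ω * (if ε ≤ ‖mulV A (traj A b x0 ω i) - b‖ / ‖traj A b x0 ω i - x‖
      then (1:ℝ) else 0)), Finset.mul_sum]
  apply Finset.sum_le_sum
  intro ρ _
  set t₀ : Fin m := ⟨0, hm⟩
  set z := traj A b x0 (combineE ii (t₀, ρ)) i with hzdef
  have hzt : ∀ t : Fin m, traj A b x0 (combineE ii (t, ρ)) i = z := by
    intro t
    apply traj_congr
    intro l hl hli
    have hlne : (⟨l, hl⟩ : Fin k) ≠ ii := by
      intro h
      rw [Fin.ext_iff] at h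
      simp only [hii] at h
      omega
    rw [combineE_ne _ _ _ _ hlne, combineE_ne _ _ _ _ hlne]
  have htraj1 : ∀ t : Fin m, traj A b x0 (combineE ii (t, ρ)) (i+1) = proj A b t z := by
    intro t
    rw [traj, dif_pos hik]
    have : (⟨i, hik⟩ : Fin k) = ii := rfl
    rw [this, combineE_at, hzt t]
  have hz : z ≠ x := hne _ i hik.le
  have hproj : ∀ t, proj A b t z ≠ x := fun t => by
    rw [← htraj1 t]; exact hne _ (i+1) hik
  set W : ℝ := ∏ j : {j : Fin k // j ≠ ii}, ‖rowv A (ρ j)‖ ^ 2 / frobSq A with hW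
  have hW0 : 0 ≤ W := Finset.prod_nonneg fun j _ => by positivity
  set χ : ℝ := if ε ≤ ‖mulV A z - b‖ / ‖z - x‖ then (1:ℝ) else 0 with hχ
  have hL : ∑ t : Fin m, wt A (combineE ii (t, ρ)) *
      Real.log (‖traj A b x0 (combineE ii (t, ρ)) (i+1) - x‖ /
        ‖traj A b x0 (combineE ii (t, ρ)) i - x‖)
      = W * ∑ t : Fin m, (‖rowv A t‖ ^ 2 / frobSq A) *
          Real.log (‖proj A b t z - x‖ / ‖z - x‖) := by
    rw [Finset.mul_sum]
    refine Finset.sum_congr rfl fun t _ => ?_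
    rw [wt_combine, htraj1 t, hzt t]
    ring
  have hP : ∑ t : Fin m, wt A (combineE ii (t, ρ)) *
      (if ε ≤ ‖mulV A (traj A b x0 (combineE ii (t, ρ)) i) - b‖ /
          ‖traj A b x0 (combineE ii (t, ρ)) i - x‖ then (1:ℝ) else 0)
      = W * χ := by
    have : ∀ t : Fin m, wt A (combineE ii (t, ρ)) *
        (if ε ≤ ‖mulV A (traj A b x0 (combineE ii (t, ρ)) i) - b‖ /
            ‖traj A b x0 (combineE ii (t, ρ)) i - x‖ then (1:ℝ) else 0)
        = (‖rowv A t‖ ^ 2 / frobSq A) * (W * χ) := by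
      intro t
      rw [wt_combine, hzt t, ← hχ]
      ring
    rw [Finset.sum_congr rfl fun t _ => this t, ← Finset.sum_mul, sum_p_eq_one A hF, one_mul]
  rw [hL, hP]
  calc W * ∑ t : Fin m, (‖rowv A t‖ ^ 2 / frobSq A) *
          Real.log (‖proj A b t z - x‖ / ‖z - x‖)
      ≤ W * ((1/2) * Real.log (1 - ε ^ 2 / frobSq A) * χ) := by
        exact mul_le_mul_of_nonneg_left
          (step_bound A b x hAx hrows hm hF ε hε z hz hproj) hW0
    _ = (1/2) * Real.log (1 - ε ^ 2 / frobSq A) * (W * χ) := by ring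


open Finset in
/-- **Decay estimate for the random Kaczmarz process.** If no choice of at most `k`
projections starting from `x₀` gives the exact solution `x`, then
`E log(‖x_k − x‖/‖x₀ − x‖) ≤ (k/2) log(1 − ε²/‖A‖_F²) · (1/k) Σ_{i<k} P(‖Ax_i − b‖/‖x_i − x‖ ≥ ε)`,
where `E` and `P` are the weighted average over index sequences `ω ∈ {1,…,m}^k` with weight
`∏_j ‖a_{ω_j}‖²/‖A‖_F²`. -/
theorem decay_estimate {m n : ℕ} (A : Matrix (Fin m) (Fin n) ℝ) (hmn : m ≥ n)
    (hrank : A.rank = n) (hrows : ∀ i, rowv A i ≠ 0)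
    (x : EuclideanSpace ℝ (Fin n)) (b : EuclideanSpace ℝ (Fin m)) (hAx : mulV A x = b)
    (x0 : EuclideanSpace ℝ (Fin n)) (k : ℕ) (ε : ℝ) (hε : 0 < ε)
    (hne : ∀ ω : Fin k → Fin m, ∀ j ≤ k, traj A b x0 ω j ≠ x) :
    ∑ ω : Fin k → Fin m, wt A ω * Real.log (‖traj A b x0 ω k - x‖ / ‖x0 - x‖) ≤
      ((k : ℝ) / 2) * Real.log (1 - ε ^ 2 / frobSq A) *
        ((1 / (k : ℝ)) * ∑ i ∈ range k, ∑ ω : Fin k → Fin m,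
          wt A ω * (if ε ≤ ‖mulV A (traj A b x0 ω i) - b‖ / ‖traj A b x0 ω i - x‖
            then (1 : ℝ) else 0)) := by
  rcases Nat.eq_zero_or_pos k with hk | hk
  · subst hk
    have hx0 : x0 ≠ x := hne (fun j => j.elim0) 0 le_rfl
    have h1 : ∀ ω : Fin 0 → Fin m,
        Real.log (‖traj A b x0 ω 0 - x‖ / ‖x0 - x‖) = 0 := by
      intro ω
      show Real.log (‖x0 - x‖ / ‖x0 - x‖) = 0
      rw [div_self (norm_ne_zero_iff.mpr (sub_ne_zero.mpr hx0)), Real.log_one]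
    simp [h1]
  rcases Nat.eq_zero_or_pos m with hm | hm
  · subst hm
    have he : IsEmpty (Fin k → Fin 0) := ⟨fun ω => (ω ⟨0, hk⟩).elim0⟩
    rw [Finset.univ_eq_empty]
    simp
  -- main case
  have hF : 0 < frobSq A := by
    rw [frobSq_eq]
    exact Finset.sum_pos (fun t _ => pow_pos (norm_pos_iff.mpr (hrows t)) 2)
      ⟨⟨0, hm⟩, Finset.mem_univ _⟩
  -- telescoping
  have tele : ∀ ω : Fin k → Fin m,
      Real.log (‖traj A b x0 ω k - x‖ / ‖x0 - x‖)
        = ∑ i ∈ range k,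
            Real.log (‖traj A b x0 ω (i+1) - x‖ / ‖traj A b x0 ω i - x‖) := by
    intro ω
    have hnz : ∀ j ≤ k, ‖traj A b x0 ω j - x‖ ≠ 0 :=
      fun j hj => norm_ne_zero_iff.mpr (sub_ne_zero.mpr (hne ω j hj))
    have h1 : ∀ i ∈ range k,
        Real.log (‖traj A b x0 ω (i+1) - x‖ / ‖traj A b x0 ω i - x‖)
          = Real.log ‖traj A b x0 ω (i+1) - x‖ - Real.log ‖traj A b x0 ω i - x‖ := by
      intro i hi
      rw [mem_range] at hi
      exact Real.log_div (hnz (i+1) hi) (hnz i hi.le)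
    rw [Finset.sum_congr rfl h1, Finset.sum_range_sub
      (fun j => Real.log ‖traj A b x0 ω j - x‖)]
    have h0 : traj A b x0 ω 0 = x0 := rfl
    rw [Real.log_div (hnz k le_rfl) (by rw [← h0] at *; exact hnz 0 (Nat.zero_le k)), h0]
  calc ∑ ω : Fin k → Fin m, wt A ω * Real.log (‖traj A b x0 ω k - x‖ / ‖x0 - x‖)
      = ∑ i ∈ range k, ∑ ω : Fin k → Fin m, wt A ω *
          Real.log (‖traj A b x0 ω (i+1) - x‖ / ‖traj A b x0 ω i - x‖) := by
        rw [Finset.sum_comm]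
        exact Finset.sum_congr rfl fun ω _ => by rw [tele ω, Finset.mul_sum]
    _ ≤ ∑ i ∈ range k, (1/2) * Real.log (1 - ε ^ 2 / frobSq A) *
          ∑ ω : Fin k → Fin m, wt A ω *
            (if ε ≤ ‖mulV A (traj A b x0 ω i) - b‖ / ‖traj A b x0 ω i - x‖
              then (1:ℝ) else 0) := by
        refine Finset.sum_le_sum fun i hi => ?_
        rw [mem_range] at hi
        exact step_sum A b x hAx hrows hm hF ε hε x0 hne i hi
    _ = ((k : ℝ) / 2) * Real.log (1 - ε ^ 2 / frobSq A) *
        ((1 / (k : ℝ)) * ∑ i ∈ range k, ∑ ω : Fin k → Fin m,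
          wt A ω * (if ε ≤ ‖mulV A (traj A b x0 ω i) - b‖ / ‖traj A b x0 ω i - x‖
            then (1 : ℝ) else 0)) := by
        rw [← Finset.mul_sum]
        have hkne : (k : ℝ) ≠ 0 := Nat.cast_ne_zero.mpr hk.ne'
        field_simp
end

section
/- Let A be a real m×n matrix and let ε > 0. Then there exist real m×n matrices A₁ and A₂ with A = A₁ + A₂, rank(A₁) ≤ ‖A‖_F²/ε², and ‖A₂‖ ≤ ε, where ‖A₂‖ is the operator norm. -/
noncomputable section

lemma frobSq_nonneg {m n : ℕ} (A : Matrix (Fin m) (Fin n) ℝ) : 0 ≤ frobSq A :=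
  Finset.sum_nonneg fun _ _ => Finset.sum_nonneg fun _ _ => sq_nonneg _

lemma opN_zero {m n : ℕ} : opN (0 : Matrix (Fin m) (Fin n) ℝ) = 0 := by
  simp [opN]

lemma my_rank_add_le {m n : ℕ} (A B : Matrix (Fin m) (Fin n) ℝ) :
    (A + B).rank ≤ A.rank + B.rank := by
  classical
  have hr : LinearMap.range (A + B).mulVecLin ≤
      LinearMap.range A.mulVecLin ⊔ LinearMap.range B.mulVecLin := by
    rintro y ⟨x, rfl⟩
    rw [Matrix.mulVecLin_add]
    exact Submodule.add_mem_sup (LinearMap.mem_range_self _ x) (LinearMap.mem_range_self _ x)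
  calc (A + B).rank ≤ Module.finrank ℝ
        (LinearMap.range A.mulVecLin ⊔ LinearMap.range B.mulVecLin : Submodule ℝ _) :=
        Submodule.finrank_mono hr
    _ ≤ A.rank + B.rank := Submodule.finrank_add_le_finrank_add_finrank _ _

lemma my_rank_vecMulVec {m n : ℕ} (w : Fin m → ℝ) (v : Fin n → ℝ) :
    (Matrix.vecMulVec w v).rank ≤ 1 := by
  classical
  rw [Matrix.vecMulVec_eq (Fin 1)]
  refine (Matrix.rank_mul_le_left _ _).trans ?_
  exact (Matrix.rank_le_card_width (Matrix.replicateCol (Fin 1) w)).trans (Fintype.card_fin 1).le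

/-- If the operator norm exceeds `ε`, there is a unit vector `v` with `‖Av‖ > ε`. -/
lemma exists_unit_vec {m n : ℕ} (A : Matrix (Fin m) (Fin n) ℝ) (ε : ℝ) (hε : 0 < ε)
    (hlt : ε < opN A) :
    ∃ v : Fin n → ℝ, (∑ j, v j ^ 2 = 1) ∧ ε ^ 2 < ∑ i, (A.mulVec v) i ^ 2 := by
  set T := LinearMap.toContinuousLinearMap (Matrix.toEuclideanLin A) with hT
  obtain ⟨x, hx⟩ := T.exists_mul_lt_of_lt_opNorm hε.le hlt
  have hx0 : x ≠ 0 := by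
    rintro rfl
    simp at hx
  have hc : 0 < ‖x‖ := norm_pos_iff.2 hx0
  set c : ℝ := ‖x‖ with hcdef
  set v : Fin n → ℝ := c⁻¹ • (fun j => x j) with hv
  have hnx : c ^ 2 = ∑ j, (x j) ^ 2 := by
    rw [hcdef, EuclideanSpace.norm_eq, Real.sq_sqrt] <;>
      [skip; positivity] <;> simp [Real.norm_eq_abs, sq_abs]
  have hsum : ∑ j, v j ^ 2 = 1 := by
    simp only [hv, Pi.smul_apply, smul_eq_mul, mul_pow]
    rw [← Finset.mul_sum, ← hnx]
    field_simp
  refine ⟨v, hsum, ?_⟩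
  have hTx : ‖T x‖ ^ 2 = ∑ i, ((A.mulVec (fun j => x j)) i) ^ 2 := by
    rw [hT]
    rw [show (LinearMap.toContinuousLinearMap (Matrix.toEuclideanLin A)) x
        = Matrix.toEuclideanLin A x from rfl, Matrix.toEuclideanLin_apply]
    rw [EuclideanSpace.norm_eq, Real.sq_sqrt (by positivity)]
    simp [Real.norm_eq_abs, sq_abs]
  have hxv : (fun j => x j) = c • v := by
    rw [hv, smul_smul, mul_inv_cancel₀ hc.ne', one_smul]
  have hmv : (A.mulVec (fun j => x j)) = c • (A.mulVec v) := by
    rw [hxv, Matrix.mulVec_smul]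
  have hsq : (ε * c) ^ 2 < ‖T x‖ ^ 2 := by
    have h1 : 0 ≤ ε * c := by positivity
    exact pow_lt_pow_left₀ hx h1 two_ne_zero
  rw [hTx, hmv] at hsq
  have heq : (ε * c) ^ 2 = ε ^ 2 * c ^ 2 := by ring
  have h2 : ∑ i, (c • (A.mulVec v)) i ^ 2 = c ^ 2 * ∑ i, (A.mulVec v) i ^ 2 := by
    rw [Finset.mul_sum]
    exact Finset.sum_congr rfl fun i _ => by simp [mul_pow, mul_comm]
  rw [h2, heq] at hsq
  have hc2 : 0 < c ^ 2 := by positivity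
  nlinarith [hsq]

/-- Frobenius norm drop when subtracting the rank-one piece. -/
lemma frobSq_sub_vecMulVec {m n : ℕ} (A : Matrix (Fin m) (Fin n) ℝ) (v : Fin n → ℝ)
    (hv : ∑ j, v j ^ 2 = 1) :
    frobSq (A - Matrix.vecMulVec (A.mulVec v) v)
      = frobSq A - ∑ i, (A.mulVec v) i ^ 2 := by
  classical
  set w := A.mulVec v with hw
  unfold frobSq
  rw [← Finset.sum_sub_distrib]
  refine Finset.sum_congr rfl fun i _ => ?_
  have hwi : w i = ∑ j, A i j * v j := by
    simp [hw, Matrix.mulVec, dotProduct]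
  have expand : ∀ j, ((A - Matrix.vecMulVec w v) i j) ^ 2
      = A i j ^ 2 - 2 * w i * (A i j * v j) + w i ^ 2 * v j ^ 2 := by
    intro j
    simp [Matrix.sub_apply, Matrix.vecMulVec_apply]
    ring
  calc ∑ j, ((A - Matrix.vecMulVec w v) i j) ^ 2
      = ∑ j, (A i j ^ 2 - 2 * w i * (A i j * v j) + w i ^ 2 * v j ^ 2) :=
        Finset.sum_congr rfl fun j _ => expand j
    _ = (∑ j, A i j ^ 2) - 2 * w i * (∑ j, A i j * v j) + w i ^ 2 * (∑ j, v j ^ 2) := by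
        rw [Finset.sum_add_distrib, Finset.sum_sub_distrib, ← Finset.mul_sum, ← Finset.mul_sum]
    _ = (∑ j, A i j ^ 2) - w i ^ 2 := by
        rw [← hwi, hv]; ring

lemma low_rank_key {m n : ℕ} (ε : ℝ) (hε : 0 < ε) : ∀ k : ℕ, ∀ A : Matrix (Fin m) (Fin n) ℝ,
    frobSq A ≤ k * ε ^ 2 → ∃ A₁ A₂ : Matrix (Fin m) (Fin n) ℝ,
      A = A₁ + A₂ ∧ (A₁.rank : ℝ) ≤ frobSq A / ε ^ 2 ∧ opN A₂ ≤ ε := by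
  have hε2 : (0:ℝ) < ε ^ 2 := by positivity
  intro k
  induction k with
  | zero =>
    intro A hA
    have hA0 : A = 0 := by
      have h0 : frobSq A = 0 := le_antisymm (by simpa using hA) (frobSq_nonneg A)
      have := (Finset.sum_eq_zero_iff_of_nonneg
        (fun i _ => Finset.sum_nonneg fun j _ => sq_nonneg (A i j))).1 h0
      ext i j
      have hj := (Finset.sum_eq_zero_iff_of_nonneg fun j _ =>
        sq_nonneg (A i j)).1 (this i (Finset.mem_univ i)) j (Finset.mem_univ j)
      simpa using pow_eq_zero_iff two_ne_zero |>.1 hj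
    refine ⟨0, 0, by simp [hA0], ?_, by simp [opN_zero, hε.le]⟩
    simp only [Matrix.rank_zero, Nat.cast_zero]
    exact div_nonneg (frobSq_nonneg _) (by positivity)
  | succ k ih =>
    intro A hA
    by_cases h : opN A ≤ ε
    · refine ⟨0, A, by simp, ?_, h⟩
      simp only [Matrix.rank_zero, Nat.cast_zero]
      exact div_nonneg (frobSq_nonneg _) (by positivity)
    · push_neg at h
      obtain ⟨v, hv1, hv2⟩ := exists_unit_vec A ε hε h
      set w := A.mulVec v with hwdef
      set B := A - Matrix.vecMulVec w v with hB
      have hfB : frobSq B = frobSq A - ∑ i, w i ^ 2 := frobSq_sub_vecMulVec A v hv1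
      have hBle : frobSq B ≤ k * ε ^ 2 := by
        rw [hfB]
        push_cast at hA ⊢
        linarith
      obtain ⟨B₁, B₂, hsum, hrank, hop⟩ := ih B hBle
      refine ⟨Matrix.vecMulVec w v + B₁, B₂, ?_, ?_, hop⟩
      · have : A = Matrix.vecMulVec w v + B := by rw [hB]; abel
        rw [this, hsum, add_assoc]
      · have h1 : ((Matrix.vecMulVec w v + B₁).rank : ℝ)
            ≤ ((Matrix.vecMulVec w v).rank : ℝ) + (B₁.rank : ℝ) := by
          exact_mod_cast my_rank_add_le _ _
        have h2 : ((Matrix.vecMulVec w v).rank : ℝ) ≤ 1 := by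
          exact_mod_cast my_rank_vecMulVec w v
        have h3 : 1 ≤ (∑ i, w i ^ 2) / ε ^ 2 := (one_le_div hε2).2 hv2.le
        have h4 : frobSq B / ε ^ 2 = frobSq A / ε ^ 2 - (∑ i, w i ^ 2) / ε ^ 2 := by
          rw [hfB, sub_div]
        linarith

/-- **Low-rank plus small decomposition.** For every `ε > 0` one can write `A = A₁ + A₂`
with `rank A₁ ≤ ‖A‖_F²/ε²` and operator norm `‖A₂‖ ≤ ε`. -/
theorem low_rank_plus_small {m n : ℕ} (A : Matrix (Fin m) (Fin n) ℝ) (ε : ℝ) (hε : 0 < ε) :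
    ∃ A₁ A₂ : Matrix (Fin m) (Fin n) ℝ,
      A = A₁ + A₂ ∧ (A₁.rank : ℝ) ≤ frobSq A / ε ^ 2 ∧ opN A₂ ≤ ε := by
  have hε2 : (0:ℝ) < ε ^ 2 := by positivity
  refine low_rank_key ε hε ⌈frobSq A / ε ^ 2⌉₊ A ?_
  have := Nat.le_ceil (frobSq A / ε ^ 2)
  calc frobSq A = (frobSq A / ε ^ 2) * ε ^ 2 := by field_simp
    _ ≤ (⌈frobSq A / ε ^ 2⌉₊ : ℝ) * ε ^ 2 := by
        exact mul_le_mul_of_nonneg_right this hε2.le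
end
end
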